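/- The function u(x,t) = φ_r − (φ_r − φ₁)·tanh²((1/2)√((φ_r−φ₁)/(3c))·(x − ct)), with Δ = (c−1)²+2g > 0, φ₁ = c−1−√Δ, φ_r = c−1+2√Δ, is a classical solution of the RLW equation u_t + u_x + u·u_x − u_{xxt} = 0. -/

import Mathlib

theorem my_hasDerivAt_tanh (x : ℝ) : HasDerivAt Real.tanh (1 - Real.tanh x ^ 2) x := by
  have h := (Real.hasDerivAt_sinh x).div (Real.hasDerivAt_cosh x) (Real.cosh_pos x).ne'
  have he : (fun y => Real.sinh y / Real.cosh y) = Real.tanh := by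
    funext y; rw [Real.tanh_eq_sinh_div_cosh]
  rw [show (Real.sinh / Real.cosh) = (fun y => Real.sinh y / Real.cosh y) from rfl, he] at h
  refine h.congr_deriv ?_
  rw [Real.tanh_eq_sinh_div_cosh]
  have hc := (Real.cosh_pos x).ne'
  have h1 := Real.cosh_sq_sub_sinh_sq x
  field_simp

theorem myD1 {ι : ℝ → ℝ} {m y : ℝ} (hι : HasDerivAt ι m y) (A P : ℝ) :
    HasDerivAt (fun z => P - A * Real.tanh (ι z) ^ 2)
      (-(2 * A * m) * (Real.tanh (ι y) * (1 - Real.tanh (ι y) ^ 2))) y := by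
  have hT : HasDerivAt (fun z => Real.tanh (ι z)) ((1 - Real.tanh (ι y) ^ 2) * m) y :=
    (my_hasDerivAt_tanh (ι y)).comp y hι
  have h := ((hT.pow 2).const_mul A).const_sub P
  refine h.congr_deriv ?_
  simp only [Pi.pow_apply, Pi.mul_apply, Nat.cast_ofNat]
  ring

theorem myD2 {ι : ℝ → ℝ} {m y : ℝ} (hι : HasDerivAt ι m y) (C : ℝ) :
    HasDerivAt (fun z => C * (Real.tanh (ι z) * (1 - Real.tanh (ι z) ^ 2)))
      (C * m * ((1 - Real.tanh (ι y) ^ 2) * (1 - 3 * Real.tanh (ι y) ^ 2))) y := by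
  have hT : HasDerivAt (fun z => Real.tanh (ι z)) ((1 - Real.tanh (ι y) ^ 2) * m) y :=
    (my_hasDerivAt_tanh (ι y)).comp y hι
  have h := (hT.mul ((hT.pow 2).const_sub 1)).const_mul C
  refine h.congr_deriv ?_
  simp only [Pi.pow_apply, Pi.mul_apply, Nat.cast_ofNat]
  ring

theorem myD3 {ι : ℝ → ℝ} {m y : ℝ} (hι : HasDerivAt ι m y) (C : ℝ) :
    HasDerivAt (fun z => C * ((1 - Real.tanh (ι z) ^ 2) * (1 - 3 * Real.tanh (ι z) ^ 2)))
      (C * m * (-2 * Real.tanh (ι y) *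
        ((1 - Real.tanh (ι y) ^ 2) * (4 - 6 * Real.tanh (ι y) ^ 2)))) y := by
  have hT : HasDerivAt (fun z => Real.tanh (ι z)) ((1 - Real.tanh (ι y) ^ 2) * m) y :=
    (my_hasDerivAt_tanh (ι y)).comp y hι
  have h := (((hT.pow 2).const_sub 1).mul (((hT.pow 2).const_mul 3).const_sub 1)).const_mul C
  refine h.congr_deriv ?_
  simp only [Pi.pow_apply, Pi.mul_apply, Nat.cast_ofNat]
  ring

theorem solitary_wave_solves_RLW (c g : ℝ) (hc : 0 < c)
    (hΔ : 0 < (c - 1) ^ 2 + 2 * g) :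
    let Δ : ℝ := (c - 1) ^ 2 + 2 * g
    let φ₁ : ℝ := c - 1 - Real.sqrt Δ
    let φr : ℝ := c - 1 + 2 * Real.sqrt Δ
    let u : ℝ → ℝ → ℝ := fun x t =>
      φr - (φr - φ₁) * Real.tanh ((1 / 2) * Real.sqrt ((φr - φ₁) / (3 * c)) * (x - c * t)) ^ 2
    let ux : ℝ → ℝ → ℝ := fun x t => deriv (fun x' => u x' t) x
    let uxx : ℝ → ℝ → ℝ := fun x t => deriv (fun x' => ux x' t) x
    let ut : ℝ → ℝ → ℝ := fun x t => deriv (fun t' => u x t') t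
    let uxxt : ℝ → ℝ → ℝ := fun x t => deriv (fun t' => uxx x t') t
    ∀ x t : ℝ, ut x t + ux x t + u x t * ux x t - uxxt x t = 0 := by
  intro Δ φ₁ φr u ux uxx ut uxxt x t
  unfold ut uxxt uxx ux u φr φ₁ Δ
  set s := Real.sqrt ((c - 1) ^ 2 + 2 * g) with hs
  rw [show c - 1 + 2 * s - (c - 1 - s) = 3 * s from by ring]
  beta_reduce
  set k := 1 / 2 * Real.sqrt (3 * s / (3 * c)) with hk
  have hsnn : 0 ≤ s := Real.sqrt_nonneg _
  have hk2 : k ^ 2 = s / (4 * c) := by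
    rw [hk, mul_pow, Real.sq_sqrt (by positivity : (0:ℝ) ≤ 3 * s / (3 * c))]
    field_simp
    ring
  have hdx : ∀ T' X : ℝ, HasDerivAt (fun x' => k * (x' - c * T')) k X := by
    intro T' X
    simpa using ((hasDerivAt_id X).sub_const (c * T')).const_mul k
  have hdt : ∀ X T : ℝ, HasDerivAt (fun t' => k * (X - c * t')) (-(k * c)) T := by
    intro X T
    have h := ((hasDerivAt_const T X).sub ((hasDerivAt_id T).const_mul c)).const_mul k
    refine h.congr_deriv ?_
    ring
  have h1 : ∀ T' X : ℝ,
      deriv (fun x' => c - 1 + 2 * s - 3 * s * Real.tanh (k * (x' - c * T')) ^ 2) X =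
        -(2 * (3 * s) * k) *
          (Real.tanh (k * (X - c * T')) * (1 - Real.tanh (k * (X - c * T')) ^ 2)) :=
    fun T' X => (myD1 (hdx T' X) (3 * s) (c - 1 + 2 * s)).deriv
  have h2 : deriv (fun t' => c - 1 + 2 * s - 3 * s * Real.tanh (k * (x - c * t')) ^ 2) t =
      -(2 * (3 * s) * (-(k * c))) *
        (Real.tanh (k * (x - c * t)) * (1 - Real.tanh (k * (x - c * t)) ^ 2)) :=
    (myD1 (hdt x t) (3 * s) (c - 1 + 2 * s)).deriv
  simp only [h1, h2]
  have h3 : ∀ T' : ℝ,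
      deriv (fun x' => -(2 * (3 * s) * k) *
        (Real.tanh (k * (x' - c * T')) * (1 - Real.tanh (k * (x' - c * T')) ^ 2))) x =
      -(2 * (3 * s) * k) * k *
        ((1 - Real.tanh (k * (x - c * T')) ^ 2) * (1 - 3 * Real.tanh (k * (x - c * T')) ^ 2)) :=
    fun T' => (myD2 (hdx T' x) (-(2 * (3 * s) * k))).deriv
  simp only [h3]
  have h4 : deriv (fun t' => -(2 * (3 * s) * k) * k *
      ((1 - Real.tanh (k * (x - c * t')) ^ 2) * (1 - 3 * Real.tanh (k * (x - c * t')) ^ 2))) t =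
      -(2 * (3 * s) * k) * k * (-(k * c)) * (-2 * Real.tanh (k * (x - c * t)) *
        ((1 - Real.tanh (k * (x - c * t)) ^ 2) * (4 - 6 * Real.tanh (k * (x - c * t)) ^ 2))) :=
    (myD3 (hdt x t) (-(2 * (3 * s) * k) * k)).deriv
  rw [h4]
  set T := Real.tanh (k * (x - c * t)) with hT
  have hc' : c ≠ 0 := hc.ne'
  field_simp at hk2
  clear_value T k s
  linear_combination (3 * s * k * (T * (1 - T ^ 2) * (4 - 6 * T ^ 2))) * hk2
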